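/- Let P, Q ∈ ℚ⟦q⟧ be the formal power series with constant term 1 whose coefficient of q^k for k ≥ 1 is −24·σ₁(k) for P and 240·σ₃(k) for Q. Then the Ramanujan differential equation q·P′ = (P² − Q)/12 holds in ℚ⟦q⟧, where P′ denotes the formal derivative of P. -/

import Mathlib

open PowerSeries

/-- σ_k(d): the sum of the k-th powers of the positive divisors of d. -/
def sigma (k d : ℕ) : ℕ := ∑ e ∈ d.divisors, e ^ k

section RamanAux
open Finset
namespace Raman

def T (n : ℕ) : Finset ((ℕ × ℕ) × (ℕ × ℕ)) :=
  ((Finset.Ioc 0 n ×ˢ Finset.Ioc 0 n) ×ˢ (Finset.Ioc 0 n ×ˢ Finset.Ioc 0 n)).filter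
    fun p => p.1.1 * p.1.2 + p.2.1 * p.2.2 = n

lemma mem_T {n : ℕ} {p : (ℕ × ℕ) × (ℕ × ℕ)} :
    p ∈ T n ↔ 0 < p.1.1 ∧ 0 < p.1.2 ∧ 0 < p.2.1 ∧ 0 < p.2.2 ∧
      p.1.1 * p.1.2 + p.2.1 * p.2.2 = n := by
  obtain ⟨⟨a, x⟩, b, y⟩ := p
  simp only [T, Finset.mem_filter, Finset.mem_product, Finset.mem_Ioc]
  constructor
  · rintro ⟨⟨⟨⟨ha, _⟩, hx, _⟩, ⟨hb, _⟩, hy, _⟩, he⟩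
    exact ⟨ha, hx, hb, hy, he⟩
  · rintro ⟨ha, hx, hb, hy, he⟩
    have hax : a * x ≤ n := by omega
    have hby : b * y ≤ n := by omega
    have h1 : a ≤ a * x := Nat.le_mul_of_pos_right a hx
    have h2 : x ≤ a * x := Nat.le_mul_of_pos_left x ha
    have h3 : b ≤ b * y := Nat.le_mul_of_pos_right b hy
    have h4 : y ≤ b * y := Nat.le_mul_of_pos_left y hb
    exact ⟨⟨⟨⟨ha, by omega⟩, hx, by omega⟩, ⟨hb, by omega⟩, hy, by omega⟩, he⟩

lemma sum_swap (n : ℕ) (c : (ℕ × ℕ) × (ℕ × ℕ) → Prop) [DecidablePred c]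
    (F : (ℕ × ℕ) × (ℕ × ℕ) → ℚ) :
    ∑ p ∈ (T n).filter c, F p
      = ∑ p ∈ (T n).filter (fun p => c (p.2, p.1)), F (p.2, p.1) := by
  refine Finset.sum_nbij' (i := fun p => (p.2, p.1)) (j := fun p => (p.2, p.1)) ?_ ?_ ?_ ?_ ?_
  · intro p hp
    simp only [Finset.mem_filter, mem_T] at hp ⊢
    obtain ⟨⟨ha, hx, hb, hy, he⟩, hc⟩ := hp
    exact ⟨⟨hb, hy, ha, hx, by omega⟩, hc⟩
  · intro p hp
    simp only [Finset.mem_filter, mem_T] at hp ⊢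
    obtain ⟨⟨ha, hx, hb, hy, he⟩, hc⟩ := hp
    exact ⟨⟨hb, hy, ha, hx, by omega⟩, hc⟩
  · intro p _; rfl
  · intro p _; rfl
  · intro p _; rfl

lemma key_bij (n : ℕ) (F : (ℕ × ℕ) × (ℕ × ℕ) → ℚ) :
    ∑ p ∈ (T n).filter (fun p => p.1.1 < p.2.1), F p
      = ∑ p ∈ (T n).filter (fun p => p.2.2 < p.1.2),
          F ((p.1.1, p.1.2 - p.2.2), (p.1.1 + p.2.1, p.2.2)) := by
  refine Finset.sum_nbij'
    (i := fun p => ((p.1.1, p.1.2 + p.2.2), (p.2.1 - p.1.1, p.2.2)))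
    (j := fun p => ((p.1.1, p.1.2 - p.2.2), (p.1.1 + p.2.1, p.2.2))) ?_ ?_ ?_ ?_ ?_
  · rintro ⟨⟨a, x⟩, b, y⟩ hp
    simp only [Finset.mem_filter, mem_T] at hp ⊢
    obtain ⟨⟨ha, hx, hb, hy, he⟩, hab⟩ := hp
    have h1 : (b - a) * y + a * y = b * y := by
      rw [← Nat.add_mul]; congr 1; omega
    have h2 : a * (x + y) = a * x + a * y := Nat.mul_add a x y
    refine ⟨⟨ha, by omega, by omega, hy, by omega⟩, by omega⟩
  · rintro ⟨⟨a, x⟩, b, y⟩ hp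
    simp only [Finset.mem_filter, mem_T] at hp ⊢
    obtain ⟨⟨ha, hx, hb, hy, he⟩, hxy⟩ := hp
    have h1 : a * (x - y) + a * y = a * x := by
      rw [← Nat.mul_add]; congr 1; omega
    have h2 : (a + b) * y = a * y + b * y := Nat.add_mul a b y
    refine ⟨⟨ha, by omega, by omega, hy, by omega⟩, by omega⟩
  · rintro ⟨⟨a, x⟩, b, y⟩ hp
    simp only [Finset.mem_filter, mem_T] at hp
    obtain ⟨⟨ha, hx, hb, hy, he⟩, hab⟩ := hp
    simp only [Prod.mk.injEq, true_and, and_true]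
    omega
  · rintro ⟨⟨a, x⟩, b, y⟩ hp
    simp only [Finset.mem_filter, mem_T] at hp
    obtain ⟨⟨ha, hx, hb, hy, he⟩, hxy⟩ := hp
    simp only [Prod.mk.injEq, true_and, and_true]
    omega
  · rintro ⟨⟨a, x⟩, b, y⟩ hp
    simp only [Finset.mem_filter, mem_T] at hp
    obtain ⟨⟨ha, hx, hb, hy, he⟩, hab⟩ := hp
    show F ((a, x), b, y) = F ((a, x + y - y), (a + (b - a), y))
    have h2 : x + y - y = x := by omega
    have h3 : a + (b - a) = b := by omega
    rw [h2, h3]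


lemma sigmaQ (k m : ℕ) :
    ((sigma k m : ℕ) : ℚ) = ∑ p ∈ m.divisorsAntidiagonal, (p.1 : ℚ) ^ k := by
  rw [Nat.sum_divisorsAntidiagonal (f := fun a x => (a : ℚ) ^ k)]
  rw [sigma]; push_cast; rfl

lemma T_eq (n : ℕ) :
    T n = (Finset.Ico 1 n).biUnion
      (fun m => Nat.divisorsAntidiagonal m ×ˢ Nat.divisorsAntidiagonal (n - m)) := by
  ext ⟨⟨a, x⟩, b, y⟩
  simp only [mem_T, Finset.mem_biUnion, Finset.mem_Ico, Finset.mem_product,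
    Nat.mem_divisorsAntidiagonal]
  constructor
  · rintro ⟨ha, hx, hb, hy, he⟩
    have h1 : 1 ≤ a * x := Nat.one_le_iff_ne_zero.2 (by positivity)
    have h2 : 1 ≤ b * y := Nat.one_le_iff_ne_zero.2 (by positivity)
    exact ⟨a * x, ⟨by omega, by omega⟩, ⟨rfl, by omega⟩, by omega, by omega⟩
  · rintro ⟨m, ⟨hm1, hm2⟩, ⟨hax, _⟩, hby, _⟩
    have h1 : 0 < a * x := by omega
    have h2 : 0 < b * y := by omega
    have ha : 0 < a := Nat.pos_of_ne_zero fun h => by simp [h] at h1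
    have hx : 0 < x := Nat.pos_of_ne_zero fun h => by simp [h] at h1
    have hb : 0 < b := Nat.pos_of_ne_zero fun h => by simp [h] at h2
    have hy : 0 < y := Nat.pos_of_ne_zero fun h => by simp [h] at h2
    exact ⟨ha, hx, hb, hy, by omega⟩

lemma master (n : ℕ) (F : (ℕ × ℕ) × (ℕ × ℕ) → ℚ) :
    ∑ p ∈ T n, F p
      = ∑ m ∈ Finset.Ico 1 n,
          ∑ p ∈ Nat.divisorsAntidiagonal m ×ˢ Nat.divisorsAntidiagonal (n - m), F p := by
  rw [T_eq]
  refine Finset.sum_biUnion ?_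
  intro m₁ h₁ m₂ h₂ hne
  simp only [Finset.mem_coe, Finset.mem_Ico] at h₁ h₂
  refine Finset.disjoint_left.2 ?_
  rintro ⟨⟨a, x⟩, b, y⟩ hp hq
  simp only [Finset.mem_product, Nat.mem_divisorsAntidiagonal] at hp hq
  exact hne (by omega)

/-- convolution: full sum of a*b -/
lemma E1 (n : ℕ) :
    ∑ p ∈ T n, ((p.1.1 : ℚ) * p.2.1)
      = ∑ m ∈ Finset.Ico 1 n, ((sigma 1 m : ℚ) * (sigma 1 (n - m) : ℚ)) := by
  rw [master]
  refine Finset.sum_congr rfl fun m _ => ?_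
  rw [Finset.sum_product, sigmaQ, sigmaQ]
  rw [Finset.sum_mul_sum]
  simp [pow_one]

/-- Reindexing of the a = b diagonal. -/
lemma diag_ab (n : ℕ) (F : (ℕ × ℕ) × (ℕ × ℕ) → ℚ) :
    ∑ p ∈ (T n).filter (fun p => p.1.1 = p.2.1), F p
      = ∑ q ∈ (Nat.divisorsAntidiagonal n).sigma (fun q => Finset.Ico 1 q.2),
          F ((q.1.1, q.2), (q.1.1, q.1.2 - q.2)) := by
  refine (Finset.sum_nbij'
    (i := fun (q : (_ : ℕ × ℕ) × ℕ) => ((q.1.1, q.2), (q.1.1, q.1.2 - q.2)))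
    (j := fun p => (⟨(p.1.1, p.1.2 + p.2.2), p.1.2⟩ : (_ : ℕ × ℕ) × ℕ)) ?_ ?_ ?_ ?_ ?_).symm
  · rintro ⟨⟨a, s⟩, x⟩ hq
    simp only [Finset.mem_sigma, Nat.mem_divisorsAntidiagonal, Finset.mem_Ico] at hq
    obtain ⟨⟨has, hn0⟩, hx1, hxs⟩ := hq
    simp only [Finset.mem_filter, mem_T]
    have has0 : 0 < a * s := by omega
    have ha : 0 < a := Nat.pos_of_ne_zero fun h => by simp [h] at has0
    have key : a * x + a * (s - x) = n := by
      rw [← Nat.mul_add]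
      have : x + (s - x) = s := by omega
      rw [this, has]
    exact ⟨⟨ha, by omega, ha, by omega, key⟩, by trivial⟩
  · rintro ⟨⟨a, x⟩, b, y⟩ hp
    simp only [Finset.mem_filter, mem_T] at hp
    obtain ⟨⟨ha, hx, hb, hy, he⟩, hab⟩ := hp
    simp only [Finset.mem_sigma, Nat.mem_divisorsAntidiagonal, Finset.mem_Ico]
    have key : a * (x + y) = n := by
      have hay : a * y = b * y := by rw [hab]
      rw [Nat.mul_add, hay, he]
    have hn : n ≠ 0 := by have := Nat.mul_pos hb hy; omega
    exact ⟨⟨key, hn⟩, by omega, by omega⟩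
  · rintro ⟨⟨a, s⟩, x⟩ hq
    simp only [Finset.mem_sigma, Nat.mem_divisorsAntidiagonal, Finset.mem_Ico] at hq
    show (⟨(a, x + (s - x)), x⟩ : (_ : ℕ × ℕ) × ℕ) = ⟨(a, s), x⟩
    have h1 : x + (s - x) = s := by omega
    rw [h1]
  · rintro ⟨⟨a, x⟩, b, y⟩ hp
    simp only [Finset.mem_filter, mem_T] at hp
    obtain ⟨⟨ha, hx, hb, hy, he⟩, hab⟩ := hp
    show ((a, x), (a, x + y - x)) = ((a, x), (b, y))
    have h1 : x + y - x = y := by omega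
    rw [h1, hab]
  · rintro ⟨⟨a, s⟩, x⟩ hq
    rfl

lemma diag_xy (n : ℕ) (F : (ℕ × ℕ) × (ℕ × ℕ) → ℚ) :
    ∑ p ∈ (T n).filter (fun p => p.1.2 = p.2.2), F p
      = ∑ q ∈ (Nat.divisorsAntidiagonal n).sigma (fun q => Finset.Ico 1 q.1),
          F ((q.2, q.1.2), (q.1.1 - q.2, q.1.2)) := by
  refine (Finset.sum_nbij'
    (i := fun (q : (_ : ℕ × ℕ) × ℕ) => ((q.2, q.1.2), (q.1.1 - q.2, q.1.2)))
    (j := fun p => (⟨(p.1.1 + p.2.1, p.1.2), p.1.1⟩ : (_ : ℕ × ℕ) × ℕ)) ?_ ?_ ?_ ?_ ?_).symm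
  · rintro ⟨⟨s, x⟩, a⟩ hq
    simp only [Finset.mem_sigma, Nat.mem_divisorsAntidiagonal, Finset.mem_Ico] at hq
    obtain ⟨⟨hsx, hn0⟩, ha1, has⟩ := hq
    simp only [Finset.mem_filter, mem_T]
    have hsx0 : 0 < s * x := by omega
    have hx : 0 < x := Nat.pos_of_ne_zero fun h => by simp [h] at hsx0
    have key : a * x + (s - a) * x = n := by
      rw [← Nat.add_mul]
      have : a + (s - a) = s := by omega
      rw [this, hsx]
    exact ⟨⟨by omega, hx, by omega, hx, key⟩, by trivial⟩
  · rintro ⟨⟨a, x⟩, b, y⟩ hp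
    simp only [Finset.mem_filter, mem_T] at hp
    obtain ⟨⟨ha, hx, hb, hy, he⟩, hxy⟩ := hp
    simp only [Finset.mem_sigma, Nat.mem_divisorsAntidiagonal, Finset.mem_Ico]
    have key : (a + b) * x = n := by
      have hbx : b * x = b * y := by rw [hxy]
      rw [Nat.add_mul, hbx, he]
    have hn : n ≠ 0 := by have := Nat.mul_pos hb hy; omega
    exact ⟨⟨key, hn⟩, by omega, by omega⟩
  · rintro ⟨⟨s, x⟩, a⟩ hq
    simp only [Finset.mem_sigma, Nat.mem_divisorsAntidiagonal, Finset.mem_Ico] at hq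
    show (⟨(a + (s - a), x), a⟩ : (_ : ℕ × ℕ) × ℕ) = ⟨(s, x), a⟩
    have h1 : a + (s - a) = s := by omega
    rw [h1]
  · rintro ⟨⟨a, x⟩, b, y⟩ hp
    simp only [Finset.mem_filter, mem_T] at hp
    obtain ⟨⟨ha, hx, hb, hy, he⟩, hxy⟩ := hp
    show ((a, x), (a + b - a, x)) = ((a, x), (b, y))
    have h1 : a + b - a = b := by omega
    rw [h1, hxy]
  · rintro ⟨⟨s, x⟩, a⟩ hq
    rfl

lemma g0 (s : ℕ) : ∑ a ∈ Finset.range s, (a : ℚ) = ((s : ℚ) ^ 2 - s) / 2 := by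
  induction s with
  | zero => simp
  | succ s ih => rw [Finset.sum_range_succ, ih]; push_cast; ring

lemma g2 (s : ℕ) : ∑ a ∈ Finset.range s, (a : ℚ) ^ 2
    = (2 * (s : ℚ) ^ 3 - 3 * (s : ℚ) ^ 2 + s) / 6 := by
  induction s with
  | zero => simp
  | succ s ih => rw [Finset.sum_range_succ, ih]; push_cast; ring

lemma ico_eq_range (f : ℕ → ℚ) (hf : f 0 = 0) (s : ℕ) :
    ∑ a ∈ Finset.Ico 1 s, f a = ∑ a ∈ Finset.range s, f a := by
  rcases Nat.eq_zero_or_pos s with h | h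
  · subst h; simp
  · rw [Finset.range_eq_Ico, Finset.sum_eq_sum_Ico_succ_bot h, hf, zero_add]

lemma h0 (s : ℕ) : ∑ a ∈ Finset.Ico 1 s, (a : ℚ) = ((s : ℚ) ^ 2 - s) / 2 := by
  rw [ico_eq_range _ (by norm_num), g0]

lemma h2 (s : ℕ) : ∑ a ∈ Finset.Ico 1 s, (a : ℚ) ^ 2
    = (2 * (s : ℚ) ^ 3 - 3 * (s : ℚ) ^ 2 + s) / 6 := by
  rw [ico_eq_range _ (by norm_num), g2]

lemma h1 (s : ℕ) : ∑ a ∈ Finset.Ico 1 s, ((a : ℚ) * ((s - a : ℕ) : ℚ))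
    = ((s : ℚ) ^ 3 - s) / 6 := by
  have hc : ∀ a ∈ Finset.Ico 1 s, (a : ℚ) * ((s - a : ℕ) : ℚ)
      = (s : ℚ) * a - (a : ℚ) ^ 2 := by
    intro a ha
    rw [Finset.mem_Ico] at ha
    rw [Nat.cast_sub (le_of_lt ha.2)]
    ring
  rw [Finset.sum_congr rfl hc, Finset.sum_sub_distrib, ← Finset.mul_sum, h0, h2]
  ring

lemma E2 (n : ℕ) : ∑ p ∈ (T n).filter (fun p => p.1.1 = p.2.1), ((p.1.1 : ℚ) * p.2.1)
    = (n : ℚ) * (sigma 1 n : ℚ) - (sigma 2 n : ℚ) := by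
  rw [diag_ab, Finset.sum_sigma]
  have hc : ∀ q ∈ Nat.divisorsAntidiagonal n,
      ∑ x ∈ Finset.Ico 1 q.2, ((q.1 : ℚ) * (q.1 : ℚ)) = (n : ℚ) * q.1 - (q.1 : ℚ) ^ 2 := by
    rintro ⟨a, s⟩ hq
    rw [Nat.mem_divisorsAntidiagonal] at hq
    obtain ⟨hprod, hn0⟩ := hq
    have hs : 0 < s := Nat.pos_of_ne_zero fun h => by simp [h] at hprod; omega
    rw [Finset.sum_const, Nat.card_Ico, nsmul_eq_mul]
    have : ((s - 1 : ℕ) : ℚ) = (s : ℚ) - 1 := by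
      rw [Nat.cast_sub hs]; norm_num
    rw [this]
    have hn : (n : ℚ) = (a : ℚ) * s := by rw [← hprod]; push_cast; ring
    rw [hn]; ring
  rw [Finset.sum_congr rfl hc, Finset.sum_sub_distrib, ← Finset.mul_sum,
    sigmaQ 1 n, sigmaQ 2 n]
  simp [pow_one]

lemma E3 (n : ℕ) : ∑ p ∈ (T n).filter (fun p => p.1.2 = p.2.2), ((p.1.1 : ℚ) * p.2.1)
    = ((sigma 3 n : ℚ) - (sigma 1 n : ℚ)) / 6 := by
  rw [diag_xy, Finset.sum_sigma]
  have hc : ∀ q ∈ Nat.divisorsAntidiagonal n,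
      ∑ a ∈ Finset.Ico 1 q.1, ((a : ℚ) * ((q.1 - a : ℕ) : ℚ))
        = ((q.1 : ℚ) ^ 3 - q.1) / 6 := fun q _ => h1 q.1
  rw [Finset.sum_congr rfl hc]
  rw [sigmaQ 3 n, sigmaQ 1 n, ← Finset.sum_sub_distrib, ← Finset.sum_div]
  congr 1
  refine Finset.sum_congr rfl fun q _ => by ring

lemma E4 (n : ℕ) : ∑ p ∈ (T n).filter (fun p => p.1.2 = p.2.2), ((p.1.1 : ℚ) * p.1.1)
    = (2 * (sigma 3 n : ℚ) - 3 * (sigma 2 n : ℚ) + (sigma 1 n : ℚ)) / 6 := by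
  rw [diag_xy, Finset.sum_sigma]
  have hc : ∀ q ∈ Nat.divisorsAntidiagonal n,
      ∑ a ∈ Finset.Ico 1 q.1, ((a : ℚ) * (a : ℚ))
        = (2 * (q.1 : ℚ) ^ 3 - 3 * (q.1 : ℚ) ^ 2 + q.1) / 6 := by
    intro q _
    rw [← h2 q.1]
    exact Finset.sum_congr rfl fun a _ => by ring
  rw [Finset.sum_congr rfl hc]
  rw [sigmaQ 3 n, sigmaQ 2 n, sigmaQ 1 n]
  rw [Finset.mul_sum, Finset.mul_sum, ← Finset.sum_sub_distrib, ← Finset.sum_add_distrib,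
    ← Finset.sum_div]
  congr 1
  refine Finset.sum_congr rfl fun q _ => by ring


lemma split {ι : Type*} (s : Finset ι) (g h : ι → ℕ) (f : ι → ℚ) :
    ∑ i ∈ s, f i = ∑ i ∈ s.filter (fun i => g i < h i), f i
      + ∑ i ∈ s.filter (fun i => h i < g i), f i
      + ∑ i ∈ s.filter (fun i => g i = h i), f i := by
  classical
  rw [← Finset.sum_filter_add_sum_filter_not s (fun i => g i = h i) f]
  have hne : ∑ i ∈ s.filter (fun i => ¬ g i = h i), f i
      = ∑ i ∈ s.filter (fun i => g i < h i), f i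
        + ∑ i ∈ s.filter (fun i => h i < g i), f i := by
    rw [← Finset.sum_filter_add_sum_filter_not
      (s.filter (fun i => ¬ g i = h i)) (fun i => g i < h i) f,
      Finset.filter_filter, Finset.filter_filter]
    congr 1
    · apply Finset.sum_congr _ (fun _ _ => rfl)
      apply Finset.filter_congr
      intro i _
      constructor <;> intro hh <;> omega
    · apply Finset.sum_congr _ (fun _ _ => rfl)
      apply Finset.filter_congr
      intro i _
      constructor <;> intro hh <;> omega
  rw [hne]
  ring

theorem key (n : ℕ) :
    12 * ∑ m ∈ Finset.Ico 1 n, ((sigma 1 m : ℚ) * (sigma 1 (n - m) : ℚ))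
      = 5 * (sigma 3 n : ℚ) + (sigma 1 n : ℚ) - 6 * n * (sigma 1 n : ℚ) := by
  rw [← E1 n]
  -- canonical filters
  -- cab : a < b, cba : b < a, ceqab : a = b, cxy : x < y, cyx : y < x, ceqxy : x = y
  -- (1) split of ∑ ab over a ? b
  have e1 : ∑ p ∈ T n, ((p.1.1 : ℚ) * p.2.1)
      = ∑ p ∈ (T n).filter (fun p => p.1.1 < p.2.1), ((p.1.1 : ℚ) * p.2.1)
        + ∑ p ∈ (T n).filter (fun p => p.2.1 < p.1.1), ((p.1.1 : ℚ) * p.2.1)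
        + ∑ p ∈ (T n).filter (fun p => p.1.1 = p.2.1), ((p.1.1 : ℚ) * p.2.1) :=
    split (T n) (fun p => p.1.1) (fun p => p.2.1) _
  -- (2) swap: ∑_{b<a} ab = ∑_{a<b} ab
  have e2 : ∑ p ∈ (T n).filter (fun p => p.2.1 < p.1.1), ((p.1.1 : ℚ) * p.2.1)
      = ∑ p ∈ (T n).filter (fun p => p.1.1 < p.2.1), ((p.1.1 : ℚ) * p.2.1) := by
    rw [sum_swap n (fun p => p.2.1 < p.1.1) (fun p => (p.1.1 : ℚ) * p.2.1)]
    exact Finset.sum_congr rfl fun p _ => by ring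
  -- (3) key bijection: ∑_{a<b} ab = P1 + P3
  have e3 : ∑ p ∈ (T n).filter (fun p => p.1.1 < p.2.1), ((p.1.1 : ℚ) * p.2.1)
      = ∑ p ∈ (T n).filter (fun p => p.2.2 < p.1.2), ((p.1.1 : ℚ) * p.1.1)
        + ∑ p ∈ (T n).filter (fun p => p.2.2 < p.1.2), ((p.1.1 : ℚ) * p.2.1) := by
    rw [key_bij n (fun p => (p.1.1 : ℚ) * p.2.1), ← Finset.sum_add_distrib]
    refine Finset.sum_congr rfl fun p _ => ?_
    push_cast
    ring
  -- (4) diagonal a = b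
  have e4 := E2 n
  -- (5) split of ∑ ab over x ? y
  have e5 : ∑ p ∈ T n, ((p.1.1 : ℚ) * p.2.1)
      = ∑ p ∈ (T n).filter (fun p => p.1.2 < p.2.2), ((p.1.1 : ℚ) * p.2.1)
        + ∑ p ∈ (T n).filter (fun p => p.2.2 < p.1.2), ((p.1.1 : ℚ) * p.2.1)
        + ∑ p ∈ (T n).filter (fun p => p.1.2 = p.2.2), ((p.1.1 : ℚ) * p.2.1) :=
    split (T n) (fun p => p.1.2) (fun p => p.2.2) _
  -- (6) swap: ∑_{x<y} ab = ∑_{y<x} ab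
  have e6 : ∑ p ∈ (T n).filter (fun p => p.1.2 < p.2.2), ((p.1.1 : ℚ) * p.2.1)
      = ∑ p ∈ (T n).filter (fun p => p.2.2 < p.1.2), ((p.1.1 : ℚ) * p.2.1) := by
    rw [sum_swap n (fun p => p.1.2 < p.2.2) (fun p => (p.1.1 : ℚ) * p.2.1)]
    exact Finset.sum_congr rfl fun p _ => by ring
  -- (7) diagonal x = y
  have e7 := E3 n
  -- (8) split of ∑ a² over a ? b
  have e8 : ∑ p ∈ T n, ((p.1.1 : ℚ) * p.1.1)
      = ∑ p ∈ (T n).filter (fun p => p.1.1 < p.2.1), ((p.1.1 : ℚ) * p.1.1)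
        + ∑ p ∈ (T n).filter (fun p => p.2.1 < p.1.1), ((p.1.1 : ℚ) * p.1.1)
        + ∑ p ∈ (T n).filter (fun p => p.1.1 = p.2.1), ((p.1.1 : ℚ) * p.1.1) :=
    split (T n) (fun p => p.1.1) (fun p => p.2.1) _
  -- (9) key bijection with a²: ∑_{a<b} a² = P1
  have e9 : ∑ p ∈ (T n).filter (fun p => p.1.1 < p.2.1), ((p.1.1 : ℚ) * p.1.1)
      = ∑ p ∈ (T n).filter (fun p => p.2.2 < p.1.2), ((p.1.1 : ℚ) * p.1.1) :=
    key_bij n (fun p => (p.1.1 : ℚ) * p.1.1)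
  -- (10) ∑_{b<a} a² = ∑_{a<b} b² = P1 + 2 P3 + P2
  have e10 : ∑ p ∈ (T n).filter (fun p => p.2.1 < p.1.1), ((p.1.1 : ℚ) * p.1.1)
      = ∑ p ∈ (T n).filter (fun p => p.1.1 < p.2.1), ((p.2.1 : ℚ) * p.2.1) := by
    rw [sum_swap n (fun p => p.2.1 < p.1.1) (fun p => (p.1.1 : ℚ) * p.1.1)]
  have e10' : ∑ p ∈ (T n).filter (fun p => p.1.1 < p.2.1), ((p.2.1 : ℚ) * p.2.1)
      = ∑ p ∈ (T n).filter (fun p => p.2.2 < p.1.2), ((p.1.1 : ℚ) * p.1.1)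
        + 2 * ∑ p ∈ (T n).filter (fun p => p.2.2 < p.1.2), ((p.1.1 : ℚ) * p.2.1)
        + ∑ p ∈ (T n).filter (fun p => p.2.2 < p.1.2), ((p.2.1 : ℚ) * p.2.1) := by
    rw [key_bij n (fun p => (p.2.1 : ℚ) * p.2.1), Finset.mul_sum,
      ← Finset.sum_add_distrib, ← Finset.sum_add_distrib]
    refine Finset.sum_congr rfl fun p _ => ?_
    push_cast
    ring
  -- (11) diagonal a = b with a² equals the one with ab
  have e11 : ∑ p ∈ (T n).filter (fun p => p.1.1 = p.2.1), ((p.1.1 : ℚ) * p.1.1)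
      = ∑ p ∈ (T n).filter (fun p => p.1.1 = p.2.1), ((p.1.1 : ℚ) * p.2.1) := by
    refine Finset.sum_congr rfl fun p hp => ?_
    rw [Finset.mem_filter] at hp
    rw [hp.2]
  -- (12) split of ∑ a² over x ? y
  have e12 : ∑ p ∈ T n, ((p.1.1 : ℚ) * p.1.1)
      = ∑ p ∈ (T n).filter (fun p => p.1.2 < p.2.2), ((p.1.1 : ℚ) * p.1.1)
        + ∑ p ∈ (T n).filter (fun p => p.2.2 < p.1.2), ((p.1.1 : ℚ) * p.1.1)
        + ∑ p ∈ (T n).filter (fun p => p.1.2 = p.2.2), ((p.1.1 : ℚ) * p.1.1) :=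
    split (T n) (fun p => p.1.2) (fun p => p.2.2) _
  -- (13) swap: ∑_{x<y} a² = ∑_{y<x} b²
  have e13 : ∑ p ∈ (T n).filter (fun p => p.1.2 < p.2.2), ((p.1.1 : ℚ) * p.1.1)
      = ∑ p ∈ (T n).filter (fun p => p.2.2 < p.1.2), ((p.2.1 : ℚ) * p.2.1) := by
    rw [sum_swap n (fun p => p.1.2 < p.2.2) (fun p => (p.1.1 : ℚ) * p.1.1)]
  -- (14) diagonal x = y with a²
  have e14 := E4 n
  linarith

end Raman
end RamanAux

/-- The Eisenstein series `P = E₂`: constant term 1, coefficient of `q^k` equal to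
`-24 σ₁(k)` for `k ≥ 1`. -/
noncomputable def Pseries : PowerSeries ℚ :=
  PowerSeries.mk fun k => if k = 0 then 1 else -24 * (sigma 1 k : ℚ)

/-- The Eisenstein series `Q = E₄`: constant term 1, coefficient of `q^k` equal to
`240 σ₃(k)` for `k ≥ 1`. -/
noncomputable def Qseries : PowerSeries ℚ :=
  PowerSeries.mk fun k => if k = 0 then 1 else 240 * (sigma 3 k : ℚ)

/-- The Ramanujan differential equation `q P' = (P² - Q)/12` in `ℚ⟦q⟧`. -/
theorem ramanujan_differential_equation :
    PowerSeries.X * (d⁄dX ℚ Pseries) = (Pseries ^ 2 - Qseries) * (12 : ℚ⟦X⟧)⁻¹ := by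
  have h12 : (12 : ℚ⟦X⟧) = PowerSeries.C (R := ℚ) 12 :=
    (map_ofNat (PowerSeries.C (R := ℚ)) 12).symm
  have hinv : (12 : ℚ⟦X⟧)⁻¹ = PowerSeries.C (R := ℚ) (1 / 12) := by
    have hu : (12 : ℚ⟦X⟧) * PowerSeries.C (R := ℚ) (1 / 12) = 1 := by
      rw [h12, ← map_mul]
      norm_num
    have hc : PowerSeries.constantCoeff (R := ℚ) (12 : ℚ⟦X⟧) ≠ 0 := by
      rw [h12]; simp
    have := PowerSeries.mul_inv_cancel (12 : ℚ⟦X⟧) hc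
    calc (12 : ℚ⟦X⟧)⁻¹ = 1 * (12 : ℚ⟦X⟧)⁻¹ := (one_mul _).symm
      _ = ((12 : ℚ⟦X⟧) * PowerSeries.C (R := ℚ) (1 / 12)) * (12 : ℚ⟦X⟧)⁻¹ := by rw [hu]
      _ = PowerSeries.C (R := ℚ) (1 / 12) * ((12 : ℚ⟦X⟧) * (12 : ℚ⟦X⟧)⁻¹) := by ring
      _ = PowerSeries.C (R := ℚ) (1 / 12) := by rw [this, mul_one]
  rw [hinv]
  ext n
  rw [PowerSeries.coeff_mul_C, map_sub]
  cases n with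
  | zero =>
    rw [PowerSeries.coeff_zero_X_mul]
    have hP : (PowerSeries.coeff (R := ℚ) 0) (Pseries ^ 2) = 1 := by
      rw [sq, PowerSeries.coeff_mul]
      simp [Pseries, PowerSeries.coeff_mk]
    have hQ : (PowerSeries.coeff (R := ℚ) 0) Qseries = 1 := by
      simp [Qseries, PowerSeries.coeff_mk]
    rw [hP, hQ]
    norm_num
  | succ n =>
    rw [PowerSeries.coeff_succ_X_mul, PowerSeries.coeff_derivative]
    have hP : ∀ k, (PowerSeries.coeff (R := ℚ) k) Pseries
        = if k = 0 then 1 else -24 * (sigma 1 k : ℚ) := fun k => PowerSeries.coeff_mk k _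
    have hQn : (PowerSeries.coeff (R := ℚ) (n + 1)) Qseries = 240 * (sigma 3 (n + 1) : ℚ) := by
      rw [Qseries, PowerSeries.coeff_mk]
      simp
    -- coefficient of P²
    have hsq : (PowerSeries.coeff (R := ℚ) (n + 1)) (Pseries ^ 2)
        = -48 * (sigma 1 (n + 1) : ℚ)
          + 576 * ∑ m ∈ Finset.Ico 1 (n + 1), ((sigma 1 m : ℚ) * (sigma 1 (n + 1 - m) : ℚ)) := by
      rw [sq, PowerSeries.coeff_mul]
      rw [Finset.Nat.sum_antidiagonal_eq_sum_range_succ_mk]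
      have hsplit : ∑ i ∈ Finset.range (n + 1 + 1),
          (PowerSeries.coeff (R := ℚ) i) Pseries * (PowerSeries.coeff (R := ℚ) (n + 1 - i)) Pseries
          = (∑ i ∈ Finset.range (n + 1),
              (PowerSeries.coeff (R := ℚ) i) Pseries * (PowerSeries.coeff (R := ℚ) (n + 1 - i)) Pseries)
            + (PowerSeries.coeff (R := ℚ) (n + 1)) Pseries * (PowerSeries.coeff (R := ℚ) 0) Pseries := by
        rw [Finset.sum_range_succ]
        norm_num
      rw [hsplit, Finset.range_eq_Ico, Finset.sum_eq_sum_Ico_succ_bot (Nat.succ_pos n)]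
      have hmid : ∑ i ∈ Finset.Ico 1 (n + 1),
          (PowerSeries.coeff (R := ℚ) i) Pseries * (PowerSeries.coeff (R := ℚ) (n + 1 - i)) Pseries
          = ∑ m ∈ Finset.Ico 1 (n + 1), (576 : ℚ) * ((sigma 1 m : ℚ) * (sigma 1 (n + 1 - m) : ℚ)) := by
        refine Finset.sum_congr rfl fun i hi => ?_
        rw [Finset.mem_Ico] at hi
        rw [hP i, hP (n + 1 - i), if_neg (by omega), if_neg (by omega)]
        ring
      rw [hmid, ← Finset.mul_sum]
      simp only [Nat.sub_zero]
      rw [hP 0, hP (n + 1), if_pos rfl, if_neg (by omega)]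
      ring
    rw [hsq, hQn, hP (n + 1), if_neg (by omega)]
    have hkey := Raman.key (n + 1)
    push_cast at hkey ⊢
    linarith
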